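/- Let β ∈ (0,1], λ > 0 and t > 0. Then the mean of the fractional Poisson process satisfies ∑_{n=0}^∞ n · p_β(n|t,λ) = λ t^β / Γ(1+β). -/

import Mathlib

open Real Finset Filter

private noncomputable def FF (β x : ℝ) (p : ℕ × ℕ) : ℝ :=
  (p.1 : ℝ) * (x ^ p.1 / p.1.factorial) *
    (((p.1 + p.2).factorial / p.2.factorial : ℝ) * (-x) ^ p.2 /
      Real.Gamma (β * ((p.2 : ℝ) + p.1) + 1))

private lemma altsum (m : ℕ) :
    ∑ n ∈ Finset.range (m+1), (-1:ℝ)^(m-n) * n * m.choose n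
      = if m = 1 then 1 else 0 := by
  cases m with
  | zero => simp
  | succ j =>
    rw [Finset.sum_range_succ']
    have h1 : ∀ i ∈ Finset.range (j+1),
        (-1:ℝ)^(j+1-(i+1)) * (↑(i+1)) * ((j+1).choose (i+1))
          = (j+1) * ((1:ℝ)^i * (-1:ℝ)^(j-i) * (j.choose i)) := by
      intro i hi
      have h : (i+1) * ((j+1).choose (i+1)) = (j+1) * j.choose i := by
        rw [mul_comm, Nat.add_one_mul_choose_eq, mul_comm]
      have hcast : ((i:ℝ)+1) * ((j+1).choose (i+1)) = ((j:ℝ)+1) * j.choose i := by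
        exact_mod_cast congrArg (Nat.cast : ℕ → ℝ) h
      have hsub : j + 1 - (i+1) = j - i := by omega
      rw [hsub]
      push_cast
      linear_combination ((-1:ℝ)^(j-i)) * hcast
    rw [Finset.sum_congr rfl h1, ← Finset.mul_sum, ← add_pow]
    cases j with
    | zero => norm_num
    | succ i => simp [zero_pow, Nat.succ_ne_zero]

private lemma Fdiag (β x : ℝ) (hβ : 0 < β) {m n : ℕ} (hn : n ≤ m) :
    FF β x (n, m - n)
      = x ^ m / Real.Gamma (β * m + 1) * ((-1:ℝ)^(m-n) * n * m.choose n) := by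
  have hadd : n + (m - n) = m := Nat.add_sub_cancel' hn
  have hcastadd : ((m - n : ℕ) : ℝ) + (n : ℝ) = m := by
    rw [← Nat.cast_add, add_comm (m-n) n, hadd]
  have hGpos : 0 < Real.Gamma (β * m + 1) := by
    apply Real.Gamma_pos_of_pos; positivity
  have hfac : ((m.choose n : ℝ)) * n.factorial * (m - n).factorial = m.factorial := by
    exact_mod_cast congrArg (Nat.cast : ℕ → ℝ) (Nat.choose_mul_factorial_mul_factorial hn)
  have hnf : (n.factorial : ℝ) ≠ 0 := Nat.cast_ne_zero.mpr n.factorial_ne_zero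
  have hkf : ((m - n).factorial : ℝ) ≠ 0 := Nat.cast_ne_zero.mpr (m-n).factorial_ne_zero
  have hxp : x ^ n * x ^ (m - n) = x ^ m := by rw [← pow_add, hadd]
  have hneg : (-x) ^ (m-n) = (-1:ℝ)^(m-n) * x^(m-n) := by
    rw [neg_pow]
  simp only [FF, hadd, hcastadd, hneg]
  field_simp
  ring_nf
  linear_combination (↑n * ↑m.factorial) * hxp
    - (↑n * x^m) * hfac

private lemma Ssum (β x : ℝ) (hβ : 0 < β) (m : ℕ) :
    ∑ p ∈ Finset.HasAntidiagonal.antidiagonal m, FF β x p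
      = if m = 1 then x / Real.Gamma (β + 1) else 0 := by
  rw [Finset.Nat.sum_antidiagonal_eq_sum_range_succ_mk]
  have h1 : ∀ n ∈ Finset.range (m+1),
      FF β x (n, m - n)
        = x ^ m / Real.Gamma (β * m + 1) * ((-1:ℝ)^(m-n) * n * m.choose n) :=
    fun n hn => Fdiag β x hβ (Nat.lt_succ_iff.mp (Finset.mem_range.mp hn))
  rw [Finset.sum_congr rfl h1, ← Finset.mul_sum, altsum]
  split_ifs with h
  · subst h; norm_num
  · simp

private lemma summable_bound (β x : ℝ) (hβ : 0 < β) (hx : 0 < x) :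
    Summable (fun m : ℕ => ((m:ℝ)+1)^2 * (2*x)^m / Real.Gamma (β*m+1)) := by
  apply Summable.of_norm_bounded_eventually_nat (g := fun m => (1/2:ℝ)^m)
    (summable_geometric_of_lt_one (by norm_num) (by norm_num))
  set K := ⌈(2:ℝ)/β⌉₊ with hK
  set c := max (4*x) 1 with hc
  have hc1 : (1:ℝ) ≤ c := le_max_right _ _
  have hc0 : (0:ℝ) ≤ 4*x := by positivity
  set y := c ^ K with hy
  have h1 : ∀ᶠ N : ℕ in atTop, 4*((K:ℝ)+1)^2 * (4*y)^N ≤ N.factorial := by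
    have ht0 := (Real.summable_pow_div_factorial (4*y)).tendsto_atTop_zero
    have hev := ht0.eventually (gt_mem_nhds
      (show (0:ℝ) < (4*((K:ℝ)+1)^2)⁻¹ by positivity))
    filter_upwards [hev] with N hN
    have hfpos : (0:ℝ) < N.factorial := by positivity
    rw [div_lt_iff₀ hfpos] at hN
    have hKpos : (0:ℝ) < 4*((K:ℝ)+1)^2 := by positivity
    calc 4*((K:ℝ)+1)^2 * (4*y)^N ≤ 4*((K:ℝ)+1)^2 * ((4*((K:ℝ)+1)^2)⁻¹ * (N.factorial:ℝ)) := by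
          exact mul_le_mul_of_nonneg_left hN.le hKpos.le
      _ = (N.factorial:ℝ) := by field_simp
  have hβm : Tendsto (fun m : ℕ => β*(m:ℝ)) atTop atTop :=
    Tendsto.const_mul_atTop hβ tendsto_natCast_atTop_atTop
  have hNt : Tendsto (fun m : ℕ => ⌊β*(m:ℝ)⌋₊) atTop atTop :=
    tendsto_nat_floor_atTop.comp hβm
  filter_upwards [hNt.eventually h1, hβm.eventually (eventually_ge_atTop (2:ℝ))]
    with m hm1 hm2
  set N := ⌊β*(m:ℝ)⌋₊ with hNdef
  have hN1 : 1 ≤ N := Nat.le_floor (by exact_mod_cast (by linarith : (1:ℝ) ≤ β*m))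
  have hNle : (N:ℝ) ≤ β*m := Nat.floor_le (by positivity)
  have hNgt : β*(m:ℝ) < N+1 := Nat.lt_floor_add_one _
  have hN1R : (1:ℝ) ≤ N := by exact_mod_cast hN1
  have hmK : (m:ℝ) ≤ (K:ℝ)*(N:ℝ) := by
    have h2β : (2:ℝ)/β ≤ K := Nat.le_ceil _
    have : β*(m:ℝ) ≤ 2*N := by linarith
    have hm' : (m:ℝ) ≤ (2/β)*N := by
      rw [div_mul_eq_mul_div, le_div_iff₀ hβ]; linarith [this]
    calc (m:ℝ) ≤ (2/β)*N := hm'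
      _ ≤ (K:ℝ)*N := by apply mul_le_mul_of_nonneg_right h2β; positivity
  have hmKnat : m ≤ K*N := by exact_mod_cast hmK
  -- Gamma lower bound
  have hGamma : (N.factorial:ℝ) ≤ Real.Gamma (β*m+1) := by
    have hmem1 : ((N:ℝ)+1) ∈ Set.Ici (2:ℝ) := by
      simp only [Set.mem_Ici]; linarith
    have hmem2 : (β*(m:ℝ)+1) ∈ Set.Ici (2:ℝ) := by
      simp only [Set.mem_Ici]; linarith
    have := Real.Gamma_strictMonoOn_Ici.monotoneOn hmem1 hmem2 (by linarith)
    rwa [Real.Gamma_nat_eq_factorial] at this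
  have hGpos : (0:ℝ) < Real.Gamma (β*m+1) := by
    apply Real.Gamma_pos_of_pos; positivity
  -- pow bounds
  have hb1 : (4*x)^m ≤ y^N := by
    calc (4*x)^m ≤ c^m := pow_le_pow_left₀ hc0 (le_max_left _ _) m
      _ ≤ c^(K*N) := pow_le_pow_right₀ hc1 hmKnat
      _ = y^N := by rw [hy, ← pow_mul]
  have hb2 : ((m:ℝ)+1)^2 ≤ ((K:ℝ)+1)^2 * 4^N := by
    have hm1' : (m:ℝ)+1 ≤ ((K:ℝ)+1)*((N:ℝ)+1) := by
      have : (K:ℝ)*N + 1 ≤ ((K:ℝ)+1)*((N:ℝ)+1) := by nlinarith [Nat.cast_nonneg (α := ℝ) K]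
      linarith
    have hN2 : (N:ℝ)+1 ≤ 2^N := by
      exact_mod_cast Nat.lt_two_pow_self (n := N)
    have h0 : (0:ℝ) ≤ (m:ℝ)+1 := by positivity
    calc ((m:ℝ)+1)^2 ≤ (((K:ℝ)+1)*((N:ℝ)+1))^2 := by
          apply pow_le_pow_left₀ h0 hm1'
      _ ≤ (((K:ℝ)+1)*2^N)^2 := by
          apply pow_le_pow_left₀ (by positivity)
          apply mul_le_mul_of_nonneg_left hN2 (by positivity)
      _ = ((K:ℝ)+1)^2 * 4^N := by
          rw [mul_pow, ← pow_mul, show N*2 = 2*N by ring, pow_mul]; norm_num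
  have hkey : ((m:ℝ)+1)^2 * (4*x)^m ≤ Real.Gamma (β*m+1) := by
    calc ((m:ℝ)+1)^2 * (4*x)^m ≤ (((K:ℝ)+1)^2 * 4^N) * y^N := by
          apply mul_le_mul hb2 hb1 (by positivity) (by positivity)
      _ = ((K:ℝ)+1)^2 * (4*y)^N := by rw [mul_pow]; ring
      _ ≤ 4*((K:ℝ)+1)^2 * (4*y)^N := by
          apply mul_le_mul_of_nonneg_right _ (by positivity)
          nlinarith [sq_nonneg ((K:ℝ)+1)]
      _ ≤ (N.factorial:ℝ) := hm1
      _ ≤ Real.Gamma (β*m+1) := hGamma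
  rw [Real.norm_eq_abs, abs_of_nonneg (by positivity)]
  rw [div_le_iff₀ hGpos]
  calc ((m:ℝ)+1)^2 * (2*x)^m = (1/2:ℝ)^m * (((m:ℝ)+1)^2 * (4*x)^m) := by
        rw [show (2*x : ℝ) = (1/2)*(4*x) by ring, mul_pow]; ring
    _ ≤ (1/2:ℝ)^m * Real.Gamma (β*m+1) := by
        apply mul_le_mul_of_nonneg_left hkey (by positivity)

private lemma absF_summable (β x : ℝ) (hβ : 0 < β) (hx : 0 < x) :
    Summable (fun p : ℕ × ℕ => |FF β x p|) := by
  rw [← Finset.HasAntidiagonal.sigmaAntidiagonalEquivProd.summable_iff]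
  refine (summable_sigma_of_nonneg fun _ => abs_nonneg _).mpr ⟨fun m => ?_, ?_⟩
  · exact Summable.of_finite
  apply Summable.of_nonneg_of_le (fun m => tsum_nonneg fun _ => abs_nonneg _) _
    (summable_bound β x hβ hx)
  intro m
  have hGpos : 0 < Real.Gamma (β*m+1) := by apply Real.Gamma_pos_of_pos; positivity
  have hterm : ∀ n ∈ Finset.range (m+1),
      |FF β x (n, m - n)| ≤ ((m:ℝ)+1) * ((2*x)^m / Real.Gamma (β*m+1)) := by
    intro n hn
    have hnm : n ≤ m := Nat.lt_succ_iff.mp (Finset.mem_range.mp hn)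
    rw [Fdiag β x hβ hnm]
    have hCle : (m.choose n : ℝ) ≤ 2^m := by
      have h := Finset.single_le_sum (f := fun i => m.choose i)
        (fun i _ => Nat.zero_le _) (Finset.mem_range.mpr (Nat.lt_succ_of_le hnm))
      rw [Nat.sum_range_choose] at h
      exact_mod_cast h
    rw [abs_mul, abs_of_nonneg (by positivity : (0:ℝ) ≤ x^m / Real.Gamma (β*m+1)),
      abs_mul, abs_mul, abs_pow, abs_neg, abs_one, one_pow, one_mul,
      Nat.abs_cast, Nat.abs_cast]
    have hnc : (n:ℝ) * (m.choose n : ℝ) ≤ ((m:ℝ)+1) * 2^m := by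
      apply mul_le_mul _ hCle (by positivity) (by positivity)
      have : (n:ℝ) ≤ m := by exact_mod_cast hnm
      linarith
    calc x^m / Real.Gamma (β*m+1) * ((n:ℝ) * (m.choose n : ℝ))
        ≤ x^m / Real.Gamma (β*m+1) * (((m:ℝ)+1) * 2^m) :=
          mul_le_mul_of_nonneg_left hnc (by positivity)
      _ = ((m:ℝ)+1) * ((2*x)^m / Real.Gamma (β*m+1)) := by rw [mul_pow]; ring
  calc (∑' (c : {p // p ∈ Finset.HasAntidiagonal.antidiagonal m}),
        |FF β x (Finset.HasAntidiagonal.sigmaAntidiagonalEquivProd ⟨m, c⟩)|)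
      = ∑ p ∈ Finset.HasAntidiagonal.antidiagonal m, |FF β x p| := by
        simp only [Finset.HasAntidiagonal.sigmaAntidiagonalEquivProd_apply]
        exact Finset.tsum_subtype (Finset.HasAntidiagonal.antidiagonal m) (fun p => |FF β x p|)
    _ = ∑ n ∈ Finset.range (m+1), |FF β x (n, m - n)| :=
        Finset.Nat.sum_antidiagonal_eq_sum_range_succ_mk _ _
    _ ≤ ∑ _n ∈ Finset.range (m+1), ((m:ℝ)+1) * ((2*x)^m / Real.Gamma (β*m+1)) :=
        Finset.sum_le_sum hterm
    _ = ((m:ℝ)+1)^2 * (2*x)^m / Real.Gamma (β*m+1) := by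
        rw [Finset.sum_const, Finset.card_range, nsmul_eq_mul]
        push_cast; ring

/-- pmf of the fractional Poisson process. -/
noncomputable def fracPoissonPMF (β lam t : ℝ) (n : ℕ) : ℝ :=
  (lam * t ^ β) ^ n / n.factorial *
    ∑' k : ℕ, ((n + k).factorial / k.factorial : ℝ) * (-(lam * t ^ β)) ^ k /
      Real.Gamma (β * ((k : ℝ) + n) + 1)

theorem fpp_mean (β lam t : ℝ) (hβ : β ∈ Set.Ioc (0 : ℝ) 1) (hlam : 0 < lam)
    (ht : 0 < t) :
    ∑' n : ℕ, (n : ℝ) * fracPoissonPMF β lam t n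
      = lam * t ^ β / Real.Gamma (1 + β) := by
  obtain ⟨hβ0, hβ1⟩ := hβ
  have hx : 0 < lam * t ^ β := mul_pos hlam (Real.rpow_pos_of_pos ht β)
  set x := lam * t ^ β with hxdef
  have habs := absF_summable β x hβ0 hx
  have hsum : Summable (FF β x) := habs.of_abs
  have h1 : ∀ n : ℕ, (n : ℝ) * fracPoissonPMF β lam t n = ∑' k, FF β x (n, k) := by
    intro n
    rw [fracPoissonPMF, ← hxdef, ← tsum_mul_left, ← tsum_mul_left]
    exact tsum_congr fun k => by simp only [FF]; ring
  rw [tsum_congr h1, ← Summable.tsum_prod' hsum hsum.prod_factor,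
    ← Finset.HasAntidiagonal.sigmaAntidiagonalEquivProd.tsum_eq (FF β x),
    Summable.tsum_sigma' (f := fun σ : Σ m : ℕ, {p // p ∈ Finset.HasAntidiagonal.antidiagonal m} =>
        FF β x (Finset.HasAntidiagonal.sigmaAntidiagonalEquivProd σ))
      (fun m => Summable.of_finite)
      (Finset.HasAntidiagonal.sigmaAntidiagonalEquivProd.summable_iff.mpr hsum)]
  have h2 : ∀ m : ℕ, (∑' (c : {p // p ∈ Finset.HasAntidiagonal.antidiagonal m}),
      FF β x (Finset.HasAntidiagonal.sigmaAntidiagonalEquivProd ⟨m, c⟩))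
        = if m = 1 then x / Real.Gamma (β + 1) else 0 := by
    intro m
    simp only [Finset.HasAntidiagonal.sigmaAntidiagonalEquivProd_apply]
    rw [Finset.tsum_subtype]
    exact Ssum β x hβ0 m
  rw [tsum_congr h2, tsum_eq_single 1 (fun b hb => by rw [if_neg hb]),
    if_pos rfl, add_comm (1:ℝ) β]
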